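/- The Bessel function J₀(2π) = (1/π)∫_0^π cos(2π·cos t) dt is nonzero. -/

import Mathlib

open Real intervalIntegral Set

noncomputable def Hf : ℝ → ℝ := fun x => Real.cos (2 * π * x) * (Real.sqrt (1 - x ^ 2))⁻¹

lemma HfContOn {a b : ℝ} (h : Set.Icc a b ⊆ Set.Ioo (-1:ℝ) 1) :
    ContinuousOn Hf (Set.Icc a b) := by
  apply ContinuousOn.mul (by fun_prop)
  apply ContinuousOn.inv₀ (by fun_prop)
  intro x hx
  have hx' := h hx
  have h1 : 0 < 1 - x ^ 2 := by nlinarith [hx'.1, hx'.2]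
  positivity

lemma HfInt {a b : ℝ} (h1 : (-1:ℝ) < a) (h2 : a ≤ b) (h3 : b < 1) :
    IntervalIntegrable Hf MeasureTheory.volume a b := by
  apply (HfContOn ?_).intervalIntegrable_of_Icc h2
  intro x hx; exact ⟨by linarith [hx.1], by linarith [hx.2]⟩

lemma Gcont : Continuous (fun s : ℝ => Real.cos (2*π*Real.sin s)) := by fun_prop

lemma fcont : Continuous (fun t : ℝ => Real.cos (2*π*Real.cos t)) := by fun_prop

lemma subst_lemma : (∫ s in (0:ℝ)..(Real.arcsin (3/4)), Real.cos (2 * π * Real.sin s))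
    = ∫ x in (0:ℝ)..(3/4), Hf x := by
  set s₃ := Real.arcsin (3/4) with hs₃
  have hs₃0 : 0 ≤ s₃ := Real.arcsin_nonneg.2 (by norm_num)
  have hs₃lt : s₃ < π/2 := Real.arcsin_lt_pi_div_two.2 (by norm_num)
  have hsin : Real.sin s₃ = 3/4 := Real.sin_arcsin (by norm_num) (by norm_num)
  have himg : Real.sin '' (Set.uIcc 0 s₃) ⊆ Set.Icc 0 (3/4) := by
    rw [Set.uIcc_of_le hs₃0]
    rintro y ⟨s, hs, rfl⟩
    obtain ⟨hl, hr⟩ := hs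
    refine ⟨Real.sin_nonneg_of_nonneg_of_le_pi hl (by linarith [Real.pi_pos]), ?_⟩
    rw [← hsin]
    exact Real.strictMonoOn_sin.monotoneOn ⟨by linarith, by linarith⟩
      ⟨by linarith, by linarith⟩ hr
  have key := intervalIntegral.integral_comp_smul_deriv'
    (f := Real.sin) (f' := Real.cos) (g := Hf) (a := 0) (b := s₃)
    (fun x _ => Real.hasDerivAt_sin x) Real.continuousOn_cos
    ((HfContOn ?_).mono himg)
  · rw [Real.sin_zero, hsin] at key
    rw [← key]
    apply intervalIntegral.integral_congr
    intro s hs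
    rw [Set.uIcc_of_le hs₃0] at hs
    obtain ⟨hl, hr⟩ := hs
    have hcpos : 0 < Real.cos s :=
      Real.cos_pos_of_mem_Ioo ⟨by linarith [Real.pi_pos], by linarith⟩
    have h1 : Real.sqrt (1 - Real.sin s ^ 2) = Real.cos s := by
      rw [show (1 : ℝ) - Real.sin s ^ 2 = Real.cos s ^ 2 by
        have := Real.sin_sq_add_cos_sq s; linarith]
      exact Real.sqrt_sq hcpos.le
    simp only [Hf, Function.comp, smul_eq_mul, h1]
    field_simp
  · intro x hx
    constructor <;> [linarith [hx.1]; nlinarith [hx.2]]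

lemma c2' : ContinuousOn (fun x : ℝ => Hf (1/2 - x)) (Set.Icc 0 (1/4:ℝ)) := by
  apply (HfContOn (a := 1/4) (b := 1/2) ?_).comp (by fun_prop) ?_
  · intro x hx; exact ⟨by linarith [hx.1], by linarith [hx.2]⟩
  · intro x hx; exact ⟨by simp; linarith [hx.2], by simp; linarith [hx.1]⟩

lemma c3' : ContinuousOn (fun x : ℝ => Hf (x + 1/2)) (Set.Icc 0 (1/4:ℝ)) := by
  apply (HfContOn (a := 1/2) (b := 3/4) ?_).comp (by fun_prop) ?_
  · intro x hx; exact ⟨by linarith [hx.1], by linarith [hx.2]⟩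
  · intro x hx; exact ⟨by simp; linarith [hx.1], by simp; linarith [hx.2]⟩

lemma pairing : ∫ x in (0:ℝ)..(3/4), Hf x
    = ∫ x in (0:ℝ)..(1/4), (Hf x + Hf (1/2 - x) + Hf (x + 1/2)) := by
  have i1 : IntervalIntegrable Hf MeasureTheory.volume 0 (1/4) := HfInt (by norm_num) (by norm_num) (by norm_num)
  have i2 : IntervalIntegrable Hf MeasureTheory.volume (1/4) (1/2) := HfInt (by norm_num) (by norm_num) (by norm_num)
  have i3 : IntervalIntegrable Hf MeasureTheory.volume (1/2) (3/4) := HfInt (by norm_num) (by norm_num) (by norm_num)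
  have e2 : (∫ x in (1/4:ℝ)..(1/2), Hf x) = ∫ x in (0:ℝ)..(1/4), Hf (1/2 - x) := by
    rw [intervalIntegral.integral_comp_sub_left Hf (1/2)]; norm_num
  have e3 : (∫ x in (1/2:ℝ)..(3/4), Hf x) = ∫ x in (0:ℝ)..(1/4), Hf (x + 1/2) := by
    rw [intervalIntegral.integral_comp_add_right Hf (1/2)]; norm_num
  have s1 : (∫ x in (0:ℝ)..(1/2), Hf x) + ∫ x in (1/2:ℝ)..(3/4), Hf x = ∫ x in (0:ℝ)..(3/4), Hf x :=
    intervalIntegral.integral_add_adjacent_intervals (i1.trans i2) i3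
  have s2 : (∫ x in (0:ℝ)..(1/4), Hf x) + ∫ x in (1/4:ℝ)..(1/2), Hf x = ∫ x in (0:ℝ)..(1/2), Hf x :=
    intervalIntegral.integral_add_adjacent_intervals i1 i2
  have ic2 : IntervalIntegrable (fun x : ℝ => Hf (1/2 - x)) MeasureTheory.volume 0 (1/4) :=
    c2'.intervalIntegrable_of_Icc (by norm_num)
  have ic3 : IntervalIntegrable (fun x : ℝ => Hf (x + 1/2)) MeasureTheory.volume 0 (1/4) :=
    c3'.intervalIntegrable_of_Icc (by norm_num)
  rw [← s1, ← s2, e2, e3, ← intervalIntegral.integral_add i1 ic2,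
    ← intervalIntegral.integral_add (i1.add ic2) ic3]

lemma cosint : ∫ x in (0:ℝ)..(1/4), Real.cos (2*π*x) = (2*π)⁻¹ := by
  have h2 : (2*π) ≠ 0 := by positivity
  rw [intervalIntegral.integral_comp_mul_left (f := Real.cos) h2]
  rw [show 2*π*(0:ℝ) = 0 by ring, show 2*π*(1/4:ℝ) = π/2 by ring, integral_cos]
  simp

lemma pointwise_bound (x : ℝ) (hx : x ∈ Set.Icc (0:ℝ) (1/4)) :
    -(18/10) * Real.cos (2*π*x) ≤ Hf x + Hf (1/2 - x) + Hf (x + 1/2) := by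
  obtain ⟨h0, h4⟩ := hx
  have hpi := Real.pi_pos
  have hc : 0 ≤ Real.cos (2*π*x) := by
    apply Real.cos_nonneg_of_mem_Icc
    constructor <;> nlinarith
  have e2 : Hf (1/2 - x) = -Real.cos (2*π*x) * (Real.sqrt (1 - (1/2-x)^2))⁻¹ := by
    simp only [Hf]
    rw [show 2*π*(1/2-x) = π - 2*π*x by ring, Real.cos_pi_sub]
  have e3 : Hf (x + 1/2) = -Real.cos (2*π*x) * (Real.sqrt (1 - (x+1/2)^2))⁻¹ := by
    simp only [Hf]
    rw [show 2*π*(x+1/2) = 2*π*x + π by ring, Real.cos_add_pi]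
  have b1 : (1:ℝ) ≤ (Real.sqrt (1 - x^2))⁻¹ := by
    apply (one_le_inv₀ (Real.sqrt_pos.2 (by nlinarith))).2
    calc Real.sqrt (1 - x^2) ≤ Real.sqrt 1 := Real.sqrt_le_sqrt (by nlinarith)
      _ = 1 := Real.sqrt_one
  have b2 : (Real.sqrt (1 - (1/2-x)^2))⁻¹ ≤ 1.2 := by
    have h56 : (5/6:ℝ) ≤ Real.sqrt (1 - (1/2-x)^2) := by
      rw [Real.le_sqrt' (by norm_num)]; nlinarith
    calc (Real.sqrt (1 - (1/2-x)^2))⁻¹ ≤ (5/6:ℝ)⁻¹ :=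
      inv_anti₀ (by norm_num) h56
    _ ≤ 1.2 := by norm_num
  have b3 : (Real.sqrt (1 - (x+1/2)^2))⁻¹ ≤ 1.6 := by
    have h58 : (5/8:ℝ) ≤ Real.sqrt (1 - (x+1/2)^2) := by
      rw [Real.le_sqrt' (by norm_num)]; nlinarith
    calc (Real.sqrt (1 - (x+1/2)^2))⁻¹ ≤ (5/8:ℝ)⁻¹ :=
      inv_anti₀ (by norm_num) h58
    _ ≤ 1.6 := by norm_num
  have hHf : Real.cos (2*π*x) * 1 ≤ Hf x := by
    simp only [Hf]
    exact mul_le_mul_of_nonneg_left b1 hc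
  rw [e2, e3]
  nlinarith [mul_le_mul_of_nonneg_left b2 hc, mul_le_mul_of_nonneg_left b3 hc]

lemma ABCbound : -(18/10) * (2*π)⁻¹
    ≤ ∫ s in (0:ℝ)..(Real.arcsin (3/4)), Real.cos (2 * π * Real.sin s) := by
  rw [subst_lemma, pairing]
  have i1 : IntervalIntegrable Hf MeasureTheory.volume 0 (1/4) := HfInt (by norm_num) (by norm_num) (by norm_num)
  have ic2 : IntervalIntegrable (fun x : ℝ => Hf (1/2 - x)) MeasureTheory.volume 0 (1/4) :=
    c2'.intervalIntegrable_of_Icc (by norm_num)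
  have ic3 : IntervalIntegrable (fun x : ℝ => Hf (x + 1/2)) MeasureTheory.volume 0 (1/4) :=
    c3'.intervalIntegrable_of_Icc (by norm_num)
  have ilhs : IntervalIntegrable (fun x : ℝ => -(18/10) * Real.cos (2*π*x)) MeasureTheory.volume 0 (1/4) := by
    apply Continuous.intervalIntegrable; fun_prop
  have heq : (∫ x in (0:ℝ)..(1/4), -(18/10) * Real.cos (2*π*x)) = -(18/10) * (2*π)⁻¹ := by
    rw [intervalIntegral.integral_const_mul, cosint]
  rw [← heq]
  exact intervalIntegral.integral_mono_on (by norm_num) ilhs ((i1.add ic2).add ic3) pointwise_bound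

lemma Dbound : ((757/1000) * (47/100) : ℝ)
    ≤ ∫ s in (Real.arcsin (3/4))..(π/2), Real.cos (2*π*Real.sin s) := by
  have hpi := Real.pi_pos
  have hpi3 : (3:ℝ) < π := Real.pi_gt_three
  have hpi2 : π < (315/100) := by
    have := Real.pi_lt_d2; linarith
  set s₃ := Real.arcsin (3/4) with hs₃def
  set c : ℝ := π/2 - (47/100) with hcdef
  have hs₃0 : 0 ≤ s₃ := Real.arcsin_nonneg.2 (by norm_num)
  have hs₃pi : s₃ ≤ π/2 := Real.arcsin_le_pi_div_two _
  have hsin3 : Real.sin s₃ = 3/4 := Real.sin_arcsin (by norm_num) (by norm_num)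
  have hcmem : c ≤ π/2 := by rw [hcdef]; linarith
  have hc0 : 0 ≤ c := by rw [hcdef]; linarith
  have hs₃c : s₃ ≤ c := by
    have h1 : Real.sin c = Real.cos (47/100) := by
      rw [hcdef, Real.sin_pi_div_two_sub]
    have h2 : (3/4:ℝ) ≤ Real.sin c := by
      rw [h1]
      have := Real.one_sub_sq_div_two_le_cos (x := (47/100))
      norm_num at this ⊢
      linarith
    have h3 : s₃ ≤ Real.arcsin (Real.sin c) := by
      rw [hs₃def]
      exact Real.monotone_arcsin h2
    rwa [Real.arcsin_sin (by linarith) hcmem] at h3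
  have i1 : IntervalIntegrable (fun s : ℝ => Real.cos (2*π*Real.sin s)) MeasureTheory.volume s₃ c :=
    Gcont.intervalIntegrable _ _
  have i2 : IntervalIntegrable (fun s : ℝ => Real.cos (2*π*Real.sin s)) MeasureTheory.volume c (π/2) :=
    Gcont.intervalIntegrable _ _
  rw [← intervalIntegral.integral_add_adjacent_intervals i1 i2]
  have sinlb : ∀ s ∈ Set.Icc s₃ (π/2), (3/4:ℝ) ≤ Real.sin s := by
    intro s hs
    rw [← hsin3]
    exact Real.strictMonoOn_sin.monotoneOn ⟨by linarith, by linarith [hs.2]⟩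
      ⟨by linarith [hs.1], hs.2⟩ hs.1
  have part1 : (0:ℝ) ≤ ∫ s in s₃..c, Real.cos (2*π*Real.sin s) := by
    apply intervalIntegral.integral_nonneg hs₃c
    intro s hs
    have h34 := sinlb s ⟨hs.1, le_trans hs.2 hcmem⟩
    have hs1 : Real.sin s ≤ 1 := Real.sin_le_one s
    rw [show 2*π*Real.sin s = 2*π - (2*π - 2*π*Real.sin s) by ring, Real.cos_two_pi_sub]
    apply Real.cos_nonneg_of_mem_Icc
    constructor
    · nlinarith
    · nlinarith
  have part2 : ((757/1000) * (47/100):ℝ) ≤ ∫ s in c..(π/2), Real.cos (2*π*Real.sin s) := by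
    have key : ∀ s ∈ Set.Icc c (π/2), ((757/1000):ℝ) ≤ Real.cos (2*π*Real.sin s) := by
      intro s hs
      set u : ℝ := π/2 - s with hudef
      have hu0 : 0 ≤ u := by rw [hudef]; linarith [hs.2]
      have hu47 : u ≤ (47/100) := by
        have h := hs.1
        rw [hcdef] at h
        rw [hudef]; linarith
      have hsin : Real.sin s = Real.cos u := by
        rw [show s = π/2 - u by rw [hudef]; ring, Real.sin_pi_div_two_sub]
      have hcos1 : 1 - u^2/2 ≤ Real.cos u := Real.one_sub_sq_div_two_le_cos
      have hcosle : Real.cos u ≤ 1 := Real.cos_le_one u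
      rw [hsin, show 2*π*Real.cos u = 2*π - 2*π*(1 - Real.cos u) by ring,
        Real.cos_two_pi_sub]
      have hb := Real.one_sub_sq_div_two_le_cos (x := 2*π*(1 - Real.cos u))
      have hd : 0 ≤ 1 - Real.cos u := by linarith
      have hu2 : u^2 ≤ 2209/10000 := by
        nlinarith [mul_le_mul hu47 hu47 hu0 (by norm_num : (0:ℝ) ≤ 47/100)]
      have hd2 : 1 - Real.cos u ≤ 110450/1000000 := by linarith
      have hpd : π*(1 - Real.cos u) ≤ (315/100)*(110450/1000000) :=
        mul_le_mul hpi2.le hd2 hd (by norm_num)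
      have hpd0 : 0 ≤ π*(1 - Real.cos u) := by positivity
      have hq : (2*π*(1 - Real.cos u))^2 ≤ 486/1000 := by
        nlinarith [sq_nonneg (π*(1 - Real.cos u))]
      linarith
    calc ((757/1000) * (47/100) : ℝ) = ∫ _ in c..(π/2), ((757/1000):ℝ) := by
          rw [intervalIntegral.integral_const, smul_eq_mul, hcdef]; ring
      _ ≤ ∫ s in c..(π/2), Real.cos (2*π*Real.sin s) :=
          intervalIntegral.integral_mono_on hcmem (intervalIntegrable_const) i2 key
  linarith

lemma reduce : (∫ t in (0:ℝ)..π, Real.cos (2 * π * Real.cos t))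
    = 2 * ∫ s in (0:ℝ)..(π/2), Real.cos (2 * π * Real.sin s) := by
  have hpi := Real.pi_pos
  have i1 : IntervalIntegrable (fun t : ℝ => Real.cos (2*π*Real.cos t)) MeasureTheory.volume 0 (π/2) :=
    fcont.intervalIntegrable _ _
  have i2 : IntervalIntegrable (fun t : ℝ => Real.cos (2*π*Real.cos t)) MeasureTheory.volume (π/2) π :=
    fcont.intervalIntegrable _ _
  have refl1 : (∫ t in (π/2:ℝ)..π, Real.cos (2*π*Real.cos t))
      = ∫ t in (0:ℝ)..(π/2), Real.cos (2*π*Real.cos t) := by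
    have := intervalIntegral.integral_comp_sub_left
      (fun t : ℝ => Real.cos (2*π*Real.cos t)) π (a := 0) (b := π/2)
    rw [show π - π/2 = π/2 by ring, sub_zero] at this
    rw [← this]
    apply intervalIntegral.integral_congr
    intro t _
    simp only
    rw [Real.cos_pi_sub]
    rw [show 2*π*(-Real.cos t) = -(2*π*Real.cos t) by ring, Real.cos_neg]
  have conv : (∫ t in (0:ℝ)..(π/2), Real.cos (2*π*Real.cos t))
      = ∫ s in (0:ℝ)..(π/2), Real.cos (2*π*Real.sin s) := by
    have := intervalIntegral.integral_comp_sub_left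
      (fun s : ℝ => Real.cos (2*π*Real.sin s)) (π/2) (a := 0) (b := π/2)
    rw [sub_self, sub_zero] at this
    rw [← this]
    apply intervalIntegral.integral_congr
    intro t _
    simp only
    rw [Real.sin_pi_div_two_sub]
  rw [← intervalIntegral.integral_add_adjacent_intervals i1 i2, refl1, conv]
  ring

theorem besselJzero_two_pi_ne_zero :
    (1 / π) * (∫ t in (0:ℝ)..π, Real.cos (2 * π * Real.cos t)) ≠ 0 := by
  have hpi := Real.pi_pos
  have hpi3 : (3:ℝ) < π := Real.pi_gt_three
  have hsplit : (∫ s in (0:ℝ)..(Real.arcsin (3/4)), Real.cos (2*π*Real.sin s))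
      + (∫ s in (Real.arcsin (3/4))..(π/2), Real.cos (2*π*Real.sin s))
      = ∫ s in (0:ℝ)..(π/2), Real.cos (2*π*Real.sin s) :=
    intervalIntegral.integral_add_adjacent_intervals
      (Gcont.intervalIntegrable _ _) (Gcont.intervalIntegrable _ _)
  have h1 := ABCbound
  have h2 := Dbound
  have hinv : (2*π)⁻¹ ≤ 1/6 := by
    rw [inv_le_comm₀ (by positivity) (by norm_num)]
    linarith
  have hpos : 0 < ∫ t in (0:ℝ)..π, Real.cos (2 * π * Real.cos t) := by
    rw [reduce, ← hsplit]
    have : -(18/10) * (2*π)⁻¹ ≥ -(18/10) * (1/6) := by nlinarith [Real.pi_pos]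
    nlinarith
  positivity
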